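/- arXiv:0910.4460 — 3 statements merged into one kernel-verified Lean document; each statement's English description precedes it below -/
import Mathlib

section
/- Let α_1, …, α_n : I → ℕ be dimension vectors with α = Σ_k α_k, and let W_n ⊆ W_{n−1} ⊆ ⋯ ⊆ W_1 = V_α be a chain of I-graded subspaces such that dim_k (W_k)_i − dim_k (W_{k+1})_i = α_k(i) for all i ∈ I and 1 ≤ k ≤ n (with the convention W_{n+1} = 0). Then the set {x ∈ E_α : every W_k is x-stable} is a k-linear subspace of E_α of dimension Σ_{h∈H} Σ_{1≤k≤l≤n} α_k(s(h)) · α_l(t(h)). (This is the computation, in the proof of Lemma 1.4, of the rank of the vector bundle π : E_{α_1,…,α_n} → Gr(α_n, α_n+α_{n−1}, …, α) whose fiber over a flag is the space of representations compatible with that flag.) -/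
open Module

/-- The space `E_α` of representations of the quiver `(I, H, s, t)` of dimension vector `α`. -/
abbrev Esp (K : Type) [Field K] {I H : Type} (s t : H → I) (α : I → ℕ) : Type :=
  ∀ h : H, (Fin (α (s h)) → K) →ₗ[K] (Fin (α (t h)) → K)

section Aux

variable {K : Type} [Field K]

/-- Maps compatible with a pair of flags. -/
def compatFlag {V V' : Type} [AddCommGroup V] [Module K V] [AddCommGroup V'] [Module K V']
    {m : ℕ} (W : Fin m → Submodule K V) (W' : Fin m → Submodule K V') :
    Submodule K (V →ₗ[K] V') :=
  ⨅ j, (W j).compatibleMaps (W' j)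

lemma mem_compatFlag {V V' : Type} [AddCommGroup V] [Module K V] [AddCommGroup V'] [Module K V']
    {m : ℕ} {W : Fin m → Submodule K V} {W' : Fin m → Submodule K V'} {f : V →ₗ[K] V'} :
    f ∈ compatFlag W W' ↔ ∀ j, Submodule.map f (W j) ≤ W' j := by
  rw [compatFlag, Submodule.mem_iInf]
  exact forall_congr' fun j => Submodule.map_le_iff_le_comap.symm

lemma nat_telescope {n : ℕ} (f : ℕ → ℕ) (a : ℕ → ℕ)
    (h : ∀ k < n, f k = a k + f (k + 1)) :
    f 0 = (∑ k ∈ Finset.range n, a k) + f n := by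
  induction n with
  | zero => simp
  | succ n ih =>
    rw [Finset.sum_range_succ, ih (fun k hk => h k (by omega)), h n (by omega)]
    ring

lemma flag_le_one {V : Type} [AddCommGroup V] [Module K V] {n : ℕ}
    (W : Fin (n + 2) → Submodule K V)
    (hC : ∀ j : Fin (n + 1), W j.succ ≤ W j.castSucc) :
    ∀ j : Fin (n + 1), W j.succ ≤ W 1 := by
  intro j
  induction j using Fin.induction with
  | zero => rw [Fin.succ_zero_eq_one]
  | succ i ih =>
    calc W i.succ.succ ≤ W i.succ.castSucc := hC i.succ
    _ = W i.castSucc.succ := by rw [Fin.succ_castSucc]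
    _ ≤ W 1 := ih

/-- Telescoped dimension of the total space of a flag. -/
lemma flag_total_dim {V : Type} [AddCommGroup V] [Module K V] [FiniteDimensional K V]
    {n : ℕ} (W : Fin (n + 1) → Submodule K V) (b : Fin n → ℕ)
    (hT : W 0 = ⊤) (hB : W (Fin.last n) = ⊥)
    (hD : ∀ j : Fin n, finrank K (W j.castSucc) = b j + finrank K (W j.succ)) :
    finrank K V = ∑ j : Fin n, b j := by
  have key := nat_telescope (n := n)
    (fun k => if h : k < n + 1 then finrank K (W ⟨k, h⟩) else 0)
    (fun k => if h : k < n then b ⟨k, h⟩ else 0) ?_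
  · simp only [Nat.zero_lt_succ, dif_pos, Nat.lt_succ_self] at key
    have h0 : W ⟨0, Nat.zero_lt_succ n⟩ = ⊤ := hT
    have hn : W ⟨n, Nat.lt_succ_self n⟩ = ⊥ := hB
    rw [h0, hn, finrank_top, finrank_bot, add_zero] at key
    rw [key, ← Fin.sum_univ_eq_sum_range (fun k => if h : k < n then b ⟨k, h⟩ else 0) n]
    exact Finset.sum_congr rfl fun i _ => by simp [dif_pos i.2]
  · intro k hk
    have h1 : k < n + 1 := by omega
    have h2 : k + 1 < n + 1 := by omega
    simp only [dif_pos h1, dif_pos h2, dif_pos hk]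
    have := hD ⟨k, hk⟩
    have e1 : (⟨k, hk⟩ : Fin n).castSucc = ⟨k, h1⟩ := rfl
    have e2 : (⟨k, hk⟩ : Fin n).succ = ⟨k + 1, h2⟩ := rfl
    rw [e1, e2] at this
    exact this

set_option maxHeartbeats 1000000 in
set_option synthInstance.maxHeartbeats 200000 in
/-- Main lemma: dimension of the space of flag-compatible maps. -/
lemma compatFlag_finrank (n : ℕ) :
    ∀ (V V' : Type) [AddCommGroup V] [Module K V] [AddCommGroup V'] [Module K V']
      [FiniteDimensional K V] [FiniteDimensional K V']
      (W : Fin (n + 1) → Submodule K V) (W' : Fin (n + 1) → Submodule K V')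
      (a b : Fin n → ℕ),
      W 0 = ⊤ → W (Fin.last n) = ⊥ → W' 0 = ⊤ → W' (Fin.last n) = ⊥ →
      (∀ j : Fin n, W j.succ ≤ W j.castSucc) →
      (∀ j : Fin n, W' j.succ ≤ W' j.castSucc) →
      (∀ j : Fin n, finrank K (W j.castSucc) = a j + finrank K (W j.succ)) →
      (∀ j : Fin n, finrank K (W' j.castSucc) = b j + finrank K (W' j.succ)) →
      finrank K (compatFlag W W') =
        ∑ x : Fin n, ∑ y : Fin n, if x ≤ y then a x * b y else 0 := by
  induction n with
  | zero =>
    intro V V' _ _ _ _ _ _ W W' a b hT hB hT' hB' _ _ _ _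
    have hV : finrank K V = 0 := by
      rw [← finrank_top K V, ← hT, show (0 : Fin 1) = Fin.last 0 from rfl, hB, finrank_bot]
    have : finrank K (V →ₗ[K] V') = 0 := by
      rw [Module.finrank_linearMap, hV, zero_mul]
    have := Submodule.finrank_le (compatFlag W W')
    simp only [Finset.univ_eq_empty, Finset.sum_empty]
    omega
  | succ n ih =>
    intro V V' _ _ _ _ _ _ W W' a b hT hB hT' hB' hC hC' hD hD'
    set V₁ := W 1 with hV₁def
    set V₁' := W' 1 with hV₁'def
    have hle : ∀ j : Fin (n + 1), W j.succ ≤ V₁ := flag_le_one W hC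
    have hle' : ∀ j : Fin (n + 1), W' j.succ ≤ V₁' := flag_le_one W' hC'
    set Wt : Fin (n + 1) → Submodule K V₁ :=
      fun j => (W j.succ).comap V₁.subtype with hWtdef
    set Wt' : Fin (n + 1) → Submodule K V₁' :=
      fun j => (W' j.succ).comap V₁'.subtype with hWt'def
    have hWtr : ∀ j : Fin (n + 1), finrank K (Wt j) = finrank K (W j.succ) :=
      fun j => (Submodule.comapSubtypeEquivOfLe (hle j)).finrank_eq
    have hWtr' : ∀ j : Fin (n + 1), finrank K (Wt' j) = finrank K (W' j.succ) :=
      fun j => (Submodule.comapSubtypeEquivOfLe (hle' j)).finrank_eq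
    have hTt : Wt 0 = ⊤ := by
      rw [hWtdef]; simp only [Fin.succ_zero_eq_one]
      exact Submodule.comap_subtype_self _
    have hTt' : Wt' 0 = ⊤ := by
      rw [hWt'def]; simp only [Fin.succ_zero_eq_one]
      exact Submodule.comap_subtype_self _
    have hBt : Wt (Fin.last n) = ⊥ := by
      rw [hWtdef]; simp only [Fin.succ_last, hB, Submodule.comap_bot, Submodule.ker_subtype]
    have hBt' : Wt' (Fin.last n) = ⊥ := by
      rw [hWt'def]; simp only [Fin.succ_last, hB', Submodule.comap_bot, Submodule.ker_subtype]
    have hCt : ∀ j : Fin n, Wt j.succ ≤ Wt j.castSucc :=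
      fun j => Submodule.comap_mono (by rw [Fin.succ_castSucc]; exact hC j.succ)
    have hCt' : ∀ j : Fin n, Wt' j.succ ≤ Wt' j.castSucc :=
      fun j => Submodule.comap_mono (by rw [Fin.succ_castSucc]; exact hC' j.succ)
    have hDt : ∀ j : Fin n, finrank K (Wt j.castSucc) = a j.succ + finrank K (Wt j.succ) := by
      intro j; rw [hWtr, hWtr, Fin.succ_castSucc]; exact hD j.succ
    have hDt' : ∀ j : Fin n, finrank K (Wt' j.castSucc) = b j.succ + finrank K (Wt' j.succ) := by
      intro j; rw [hWtr', hWtr', Fin.succ_castSucc]; exact hD' j.succ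
    have hIH := ih V₁ V₁' Wt Wt' (fun j => a j.succ) (fun j => b j.succ)
      hTt hBt hTt' hBt' hCt hCt' hDt hDt'
    -- restriction of a compatible map to the truncated flags
    have hres : ∀ f : V →ₗ[K] V', f ∈ compatFlag W W' → ∀ x ∈ V₁, f x ∈ V₁' :=
      fun f hf x hx => (mem_compatFlag.mp hf 1) (Submodule.mem_map_of_mem hx)
    have hmem : ∀ f : compatFlag W W',
        (f : V →ₗ[K] V').restrict (hres f f.2) ∈ compatFlag Wt Wt' := by
      intro f
      rw [mem_compatFlag]
      intro j
      rintro y ⟨⟨x, hxV⟩, hx, rfl⟩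
      have hx' : x ∈ W j.succ := hx
      have : (f : V →ₗ[K] V') x ∈ W' j.succ :=
        (mem_compatFlag.mp f.2 j.succ) (Submodule.mem_map_of_mem hx')
      exact this
    obtain ⟨U, hU⟩ := Submodule.exists_isCompl V₁
    set π := V₁.projectionOnto U hU with hπdef
    set πU := U.projectionOnto V₁ hU.symm with hπUdef
    have hΨmem : ∀ p : compatFlag Wt Wt' × (U →ₗ[K] V'),
        (V₁'.subtype ∘ₗ (p.1 : V₁ →ₗ[K] V₁') ∘ₗ π + p.2 ∘ₗ πU) ∈ compatFlag W W' := by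
      intro p
      rw [mem_compatFlag]
      intro j
      rcases Fin.eq_zero_or_eq_succ j with rfl | ⟨j', rfl⟩
      · rw [hT']; exact le_top
      · rintro y ⟨x, hx, rfl⟩
        have hxV₁ : x ∈ V₁ := hle j' hx
        have eπ : π x = ⟨x, hxV₁⟩ := Submodule.projectionOnto_apply_left hU ⟨x, hxV₁⟩
        have eπU : πU x = 0 := Submodule.projectionOnto_apply_of_mem_right hU.symm hxV₁
        show V₁'.subtype ((p.1 : V₁ →ₗ[K] V₁') (π x)) + p.2 (πU x) ∈ W' j'.succ
        rw [eπ, eπU, map_zero, add_zero]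
        exact (mem_compatFlag.mp p.1.2 j')
          (Submodule.mem_map_of_mem (show (⟨x, hxV₁⟩ : V₁) ∈ Wt j' from hx))
    set Φ : compatFlag W W' ≃ₗ[K] compatFlag Wt Wt' × (U →ₗ[K] V') :=
      { toFun := fun f => (⟨(f : V →ₗ[K] V').restrict (hres f f.2), hmem f⟩,
          (f : V →ₗ[K] V') ∘ₗ U.subtype)
        map_add' := fun f g => by
          refine Prod.ext ?_ rfl
          apply Subtype.ext; apply LinearMap.ext; intro x
          apply Subtype.ext
          simp [LinearMap.restrict_apply]
        map_smul' := fun c f => by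
          refine Prod.ext ?_ rfl
          apply Subtype.ext; apply LinearMap.ext; intro x
          apply Subtype.ext
          simp [LinearMap.restrict_apply]
        invFun := fun p => ⟨_, hΨmem p⟩
        left_inv := by
          intro f
          apply Subtype.ext; apply LinearMap.ext; intro x
          have hx : x ∈ V₁ ⊔ U := by rw [hU.sup_eq_top]; trivial
          rcases Submodule.mem_sup.mp hx with ⟨y, hy, z, hz, rfl⟩
          have e1 : π (y + z) = ⟨y, hy⟩ := by
            rw [map_add, Submodule.projectionOnto_apply_left hU ⟨y, hy⟩,
              Submodule.projectionOnto_apply_of_mem_right hU hz, add_zero]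
          have e2 : πU (y + z) = ⟨z, hz⟩ := by
            rw [map_add, Submodule.projectionOnto_apply_of_mem_right hU.symm hy,
              Submodule.projectionOnto_apply_left hU.symm ⟨z, hz⟩, zero_add]
          show V₁'.subtype ((f : V →ₗ[K] V').restrict (hres f f.2) (π (y + z)))
              + (f : V →ₗ[K] V') (U.subtype (πU (y + z))) = (f : V →ₗ[K] V') (y + z)
          rw [e1, e2, map_add]
          rfl
        right_inv := by
          intro p
          refine Prod.ext ?_ ?_
          · apply Subtype.ext; apply LinearMap.ext; intro x
            apply Subtype.ext
            have eπ : π ↑x = x := Submodule.projectionOnto_apply_left hU x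
            have eπU : πU ↑x = 0 :=
              Submodule.projectionOnto_apply_of_mem_right hU.symm x.2
            show V₁'.subtype ((p.1 : V₁ →ₗ[K] V₁') (π ↑x)) + p.2 (πU ↑x)
                = ((p.1 : V₁ →ₗ[K] V₁') x : V')
            rw [eπ, eπU, map_zero, add_zero]
            rfl
          · apply LinearMap.ext; intro u
            have eπ : π ↑u = 0 :=
              Submodule.projectionOnto_apply_of_mem_right hU u.2
            have eπU : πU ↑u = u := Submodule.projectionOnto_apply_left hU.symm u
            show V₁'.subtype ((p.1 : V₁ →ₗ[K] V₁') (π ↑u)) + p.2 (πU ↑u) = p.2 u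
            rw [eπ, eπU, map_zero]
            simp } with hΦdef
    -- dimension count
    have hUdim : finrank K U = a 0 := by
      have hcompl := Submodule.finrank_add_eq_of_isCompl hU
      have hd0 := hD 0
      rw [Fin.castSucc_zero, Fin.succ_zero_eq_one, hT, finrank_top, ← hV₁def] at hd0
      omega
    have hVdim' : finrank K V' = ∑ j : Fin (n + 1), b j := flag_total_dim W' b hT' hB' hD'
    have hrn : finrank K (compatFlag W W')
        = finrank K (compatFlag Wt Wt') + a 0 * (∑ j : Fin (n + 1), b j) := by
      letI : Module.Free K ↥(compatFlag Wt Wt') :=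
        Module.Free.of_divisionRing (K := K) (V := ↥(compatFlag Wt Wt'))
      letI : Module.Free K (U →ₗ[K] V') :=
        Module.Free.of_divisionRing (K := K) (V := U →ₗ[K] V')
      have heq : finrank K (compatFlag W W')
          = finrank K (↥(compatFlag Wt Wt') × (U →ₗ[K] V')) := LinearEquiv.finrank_eq Φ
      rw [Module.finrank_prod, Module.finrank_linearMap, hUdim, hVdim'] at heq
      exact heq
    rw [hrn, hIH]
    -- arithmetic
    have h0 : ∑ y : Fin (n + 1), (if (0 : Fin (n + 1)) ≤ y then a 0 * b y else 0)
        = a 0 * ∑ y : Fin (n + 1), b y := by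
      rw [Finset.mul_sum]
      exact Finset.sum_congr rfl fun y _ => if_pos (Fin.zero_le y)
    have h1 : ∀ x : Fin n, (∑ y : Fin (n + 1), if x.succ ≤ y then a x.succ * b y else 0)
        = ∑ y : Fin n, if x ≤ y then a x.succ * b y.succ else 0 := by
      intro x
      rw [Fin.sum_univ_succ]
      have hns : ¬ (x.succ ≤ (0 : Fin (n + 1))) := by
        simp [Fin.le_zero_iff, Fin.succ_ne_zero]
      rw [if_neg hns, zero_add]
      exact Finset.sum_congr rfl fun y _ => by simp only [Fin.succ_le_succ_iff]
    rw [Fin.sum_univ_succ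
      (f := fun x : Fin (n + 1) => ∑ y : Fin (n + 1), if x ≤ y then a x * b y else 0)]
    rw [h0, Finset.sum_congr rfl fun x _ => h1 x]
    exact Nat.add_comm _ _

lemma finrank_pi_submodule {ι : Type} [Fintype ι] {M : ι → Type}
    [∀ i, AddCommGroup (M i)] [∀ i, Module K (M i)] [∀ i, FiniteDimensional K (M i)]
    (p : ∀ i, Submodule K (M i)) :
    finrank K (Submodule.pi Set.univ p) = ∑ i, finrank K (p i) := by
  have e : (Submodule.pi Set.univ p) ≃ₗ[K] (∀ i, p i) :=
    { toFun := fun f i => ⟨f.1 i, f.2 i (Set.mem_univ i)⟩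
      map_add' := fun f g => rfl
      map_smul' := fun c f => rfl
      invFun := fun g => ⟨fun i => g i, fun i _ => (g i).2⟩
      left_inv := fun f => rfl
      right_inv := fun g => rfl }
  have heq : finrank K (Submodule.pi Set.univ p) = finrank K (∀ i, p i) :=
    LinearEquiv.finrank_eq e
  rw [heq, Module.finrank_pi_fintype]

end Aux

/-- The computation of the rank of the vector bundle `π : E_{α₁,…,αₙ} → Gr(αₙ, …, α)` from
the proof of Lemma 1.4: given a chain of `I`-graded subspaces
`Wₙ ⊆ … ⊆ W₁ = V_α` (with the convention `W_{n+1} = 0`) whose successive subquotients have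
dimension vectors `α₁, …, αₙ`, the set of representations `x ∈ E_α` stabilizing every `Wₖ`
is a linear subspace of dimension `∑_{h} ∑_{k ≤ l} αₖ(s h) · α_l(t h)`. -/
theorem flag_compatible_reps_dimension {K : Type} [Field K] {I H : Type}
    [Fintype I] [Fintype H] (s t : H → I) (n : ℕ) (α : Fin n → I → ℕ)
    (W : Fin (n + 1) → ∀ i : I, Submodule K (Fin (∑ j, α j i) → K))
    (hTop : ∀ i, W 0 i = ⊤)
    (hBot : ∀ i, W (Fin.last n) i = ⊥)
    (hChain : ∀ (j : Fin n) (i : I), W j.succ i ≤ W j.castSucc i)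
    (hDim : ∀ (j : Fin n) (i : I),
      finrank K (W j.castSucc i) = α j i + finrank K (W j.succ i)) :
    ∃ S : Submodule K (Esp K s t (fun i => ∑ j, α j i)),
      (S : Set (Esp K s t (fun i => ∑ j, α j i))) =
        {x : Esp K s t (fun i => ∑ j, α j i) |
          ∀ (j : Fin (n + 1)) (h : H), Submodule.map (x h) (W j (s h)) ≤ W j (t h)} ∧
      finrank K S =
        ∑ h : H, ∑ a : Fin n, ∑ b : Fin n,
          if a ≤ b then α a (s h) * α b (t h) else 0 := by
  refine ⟨Submodule.pi Set.univ
    (fun h : H => compatFlag (fun j => W j (s h)) (fun j => W j (t h))), ?_, ?_⟩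
  · ext x
    simp only [SetLike.mem_coe, Submodule.mem_pi, Set.mem_univ, forall_true_left,
      Set.mem_setOf_eq, mem_compatFlag]
    exact ⟨fun hx j h => hx h j, fun hx h j => hx j h⟩
  · rw [finrank_pi_submodule]
    refine Finset.sum_congr rfl fun h _ => ?_
    exact compatFlag_finrank n _ _ (fun j => W j (s h)) (fun j => W j (t h))
      (fun j => α j (s h)) (fun j => α j (t h))
      (hTop _) (hBot _) (hTop _) (hBot _) (fun j => hChain j _) (fun j => hChain j _)
      (fun j => hDim j _) (fun j => hDim j _)
end

section
/- Fix dimension vectors α, β : I → ℕ and realize V_{α+β} = V_α ⊕ V_β as I-graded vector spaces; let W = 0 ⊕ V_β. Let F_{α,β} = {x ∈ E_{α+β} : W is x-stable}. Then the k-linear map κ : F_{α,β} → E_α × E_β sending x to (the map induced by x on V_{α+β}/W ≅ V_α, the restriction of x to W ≅ V_β) is surjective, and its kernel has k-dimension Σ_{h∈H} α_{s(h)} β_{t(h)} = Σ_{i∈I} α_i β_i − ⟨α, β⟩. (Section 1.3, equation (E:rankkappa): κ is a vector bundle of rank Σ_h α_{s(h)} β_{t(h)}.) -/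
set_option linter.unnecessarySeqFocus false


open Module

/-- The space of representations of dimension vector `α + β` on `V_{α+β} = V_α ⊕ V_β`. -/
abbrev E2 (K : Type) [Field K] {I H : Type} (s t : H → I) (α β : I → ℕ) : Type :=
  ∀ h : H, ((Fin (α (s h)) → K) × (Fin (β (s h)) → K)) →ₗ[K]
    ((Fin (α (t h)) → K) × (Fin (β (t h)) → K))

/-- The Euler form `⟨α, β⟩ = ∑ᵢ αᵢβᵢ − ∑ₕ α_{s(h)} β_{t(h)}` of the quiver. -/
def eulerForm {I H : Type} [Fintype I] [Fintype H] (s t : H → I) (α β : I → ℕ) : ℤ :=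
  (∑ i, (α i : ℤ) * β i) - ∑ h, (α (s h) : ℤ) * β (t h)

/-- The map `κ` sending a representation on `V_α ⊕ V_β` stabilizing `W = 0 ⊕ V_β` to
(the induced map on `V_{α+β}/W ≅ V_α`, the restriction to `W ≅ V_β`). -/
def kappa {K : Type} [Field K] {I H : Type} {s t : H → I} {α β : I → ℕ}
    (x : E2 K s t α β) : Esp K s t α × Esp K s t β :=
  (fun h => LinearMap.fst K _ _ ∘ₗ x h ∘ₗ LinearMap.inl K _ _,
   fun h => LinearMap.snd K _ _ ∘ₗ x h ∘ₗ LinearMap.inr K _ _)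

/-- The linear embedding of `Π h, Hom(K^{α(s h)}, K^{β(t h)})` into `E2`. -/
def Phi (K : Type) [Field K] {I H : Type} (s t : H → I) (α β : I → ℕ) :
    (∀ h : H, (Fin (α (s h)) → K) →ₗ[K] (Fin (β (t h)) → K)) →ₗ[K] E2 K s t α β where
  toFun g := fun h => LinearMap.inr K _ _ ∘ₗ g h ∘ₗ LinearMap.fst K _ _
  map_add' g g' := by
    funext h; ext v <;> simp
  map_smul' c g := by
    funext h; ext v <;> simp

theorem Phi_inj (K : Type) [Field K] {I H : Type} (s t : H → I) (α β : I → ℕ) :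
    Function.Injective (Phi K s t α β) := by
  intro g g' hg
  funext h
  refine LinearMap.ext fun a => ?_
  have := congrFun hg h
  have := congrArg (fun L => (L (a, 0)).2) this
  simpa [Phi] using this


/-- Section 1.3, equation (E:rankkappa): with `F_{α,β} = {x ∈ E_{α+β} : x(W) ⊆ W}` for
`W = 0 ⊕ V_β`, the map `κ : F_{α,β} → E_α × E_β` is surjective and its kernel has dimension
`∑_h α_{s(h)} β_{t(h)} = ∑_i α_i β_i − ⟨α, β⟩`. -/
theorem kappa_surjective_kernel_rank {K : Type} [Field K] {I H : Type}
    [Fintype I] [Fintype H] (s t : H → I) (α β : I → ℕ) :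
    ∃ F : Submodule K (E2 K s t α β),
      (F : Set (E2 K s t α β)) =
        {x : E2 K s t α β | ∀ (h : H) (b : Fin (β (s h)) → K), (x h (0, b)).1 = 0} ∧
      (∀ y : Esp K s t α × Esp K s t β, ∃ x ∈ F, kappa x = y) ∧
      ∃ N : Submodule K (E2 K s t α β),
        (N : Set (E2 K s t α β)) = {x : E2 K s t α β | x ∈ F ∧ kappa x = 0} ∧
        finrank K N = ∑ h, α (s h) * β (t h) ∧
        (∑ h, (α (s h) : ℤ) * β (t h)) = (∑ i, (α i : ℤ) * β i) - eulerForm s t α β := by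
  refine ⟨{ carrier := {x : E2 K s t α β | ∀ (h : H) (b : Fin (β (s h)) → K), (x h (0, b)).1 = 0}
            add_mem' := ?_
            zero_mem' := ?_
            smul_mem' := ?_ }, rfl, ?_, ?_⟩
  · intro x y hx hy h b; simp [hx h b, hy h b]
  · intro h b; simp
  · intro c x hx h b; simp [hx h b]
  · -- surjectivity
    intro y
    refine ⟨fun h => (y.1 h).prodMap (y.2 h), ?_, ?_⟩
    · intro h b; simp
    · unfold kappa
      refine Prod.ext ?_ ?_ <;> (funext h; ext a <;> simp)
  · -- kernel
    refine ⟨LinearMap.range (Phi K s t α β), ?_, ?_, ?_⟩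
    · ext x
      simp only [SetLike.mem_coe, LinearMap.mem_range, Set.mem_setOf_eq]
      constructor
      · rintro ⟨g, rfl⟩
        refine ⟨?_, ?_⟩
        · intro h b; simp [Phi]
        · unfold kappa
          refine Prod.ext ?_ ?_ <;> (funext h; ext a <;> simp [Phi])
      · rintro ⟨hF, hk⟩
        refine ⟨fun h => LinearMap.snd K _ _ ∘ₗ x h ∘ₗ LinearMap.inl K _ _, ?_⟩
        have h1 := congrArg Prod.fst hk
        have h2 := congrArg Prod.snd hk
        funext h
        refine LinearMap.ext fun p => ?_
        obtain ⟨a, b⟩ := p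
        have hab : (a, b) = ((a, 0) : (Fin (α (s h)) → K) × (Fin (β (s h)) → K)) + (0, b) := by
          simp
        have e1 : (x h (a, 0)).1 = 0 := by
          have := LinearMap.congr_fun (congrFun h1 h) a
          simpa [kappa] using this
        have e2 : (x h (0, b)).2 = 0 := by
          have := LinearMap.congr_fun (congrFun h2 h) b
          simpa [kappa] using this
        have e3 : (x h (0, b)).1 = 0 := hF h b
        have : x h (a, b) = x h (a, 0) + x h (0, b) := by rw [hab, map_add]
        simp only [Phi, LinearMap.coe_mk, AddHom.coe_mk, LinearMap.comp_apply,
          LinearMap.inr_apply, LinearMap.fst_apply, LinearMap.snd_apply, LinearMap.inl_apply]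
        rw [this]
        refine Prod.ext ?_ ?_
        · simp [Prod.fst_add, e1, e3]
        · simp [Prod.snd_add, e2]
    · rw [LinearMap.finrank_range_of_inj (Phi_inj K s t α β),
        Module.finrank_pi_fintype]
      congr 1
      funext h
      rw [Module.finrank_linearMap]
      simp
    · unfold eulerForm; ring
end

section
/- Let Q be a finite quiver, α : I → ℕ a dimension vector, and x ∈ E_α a representation over k = ℂ. Then the stabilizer Stab_{G_α}(x) = {g ∈ Π_{i∈I} GL(α_i, ℂ) : g_{t(h)} x_h = x_h g_{s(h)} for all h ∈ H} is a path-connected subset of Π_{i∈I} M_{α_i}(ℂ) (with its standard topology). (This is the complex-topology form of Lemma 2.8: the stabilizer of any point of E_α, which is the automorphism group Aut(M_x) of the corresponding representation, is connected; it is the reason why every G_α-equivariant local system on a G_α-orbit is trivial.) -/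
open Polynomial

/-- Lemma 2.8 (complex-topology form): for a finite quiver `(I, H, s, t)` and a
representation `x ∈ E_α` over `ℂ`, the stabilizer
`Stab_{G_α}(x) = {g ∈ ∏ᵢ GL(αᵢ, ℂ) : g_{t(h)} x_h = x_h g_{s(h)} ∀ h}` is a path-connected
subset of `∏ᵢ M_{αᵢ}(ℂ)` with its standard topology. -/
theorem stabilizer_isPathConnected {I H : Type} [Fintype I] [Fintype H]
    (s t : H → I) (α : I → ℕ)
    (x : ∀ h : H, Matrix (Fin (α (t h))) (Fin (α (s h))) ℂ) :
    IsPathConnected {g : ∀ i : I, Matrix (Fin (α i)) (Fin (α i)) ℂ |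
      (∀ i, IsUnit (g i)) ∧ ∀ h, g (t h) * x h = x h * g (s h)} := by
  classical
  set S := {g : ∀ i : I, Matrix (Fin (α i)) (Fin (α i)) ℂ |
      (∀ i, IsUnit (g i)) ∧ ∀ h, g (t h) * x h = x h * g (s h)} with hS
  have h1 : (fun i => (1 : Matrix (Fin (α i)) (Fin (α i)) ℂ)) ∈ S :=
    ⟨fun i => isUnit_one, fun h => by simp⟩
  refine ⟨_, h1, ?_⟩
  rintro g ⟨hgu, hgc⟩
  -- the polynomial z ↦ det (1 + z • (g i - 1)), for each vertex i
  set P : ∀ i : I, ℂ[X] := fun i =>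
    Matrix.det ((1 : Matrix (Fin (α i)) (Fin (α i)) ℂ[X]) + (X : ℂ[X]) • (g i - 1).map C)
    with hPdef
  have hev : ∀ (i : I) (z : ℂ),
      (P i).eval z = Matrix.det ((1 : Matrix (Fin (α i)) (Fin (α i)) ℂ) + z • (g i - 1)) := by
    intro i z
    rw [hPdef]
    rw [show (P i).eval z = (evalRingHom z) (P i) from rfl,
      RingHom.map_det, RingHom.mapMatrix_apply]
    congr 1
    ext a b
    by_cases hab : a = b <;>
      · simp only [Matrix.map_apply, Matrix.add_apply, Matrix.smul_apply, Matrix.sub_apply,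
          Matrix.one_apply, hab, if_true, if_false, smul_eq_mul, eval_add, eval_mul, eval_X,
          eval_one, eval_zero, eval_sub, eval_C, Polynomial.eval_smul, coe_evalRingHom]
  -- the path z ↦ 1 + z • (g - 1)
  set f : ℂ → ∀ i : I, Matrix (Fin (α i)) (Fin (α i)) ℂ :=
    fun z i => 1 + z • (g i - 1) with hf
  have hf0 : f 0 = fun i => 1 := by funext i; simp [hf]
  have hf1 : f 1 = g := by funext i; simp [hf]
  have hfc : Continuous f :=
    continuous_pi fun i => continuous_const.add (continuous_id.smul continuous_const)
  -- bad set of parameters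
  set B : Set ℂ := ⋃ i : I, {z : ℂ | (P i).eval z = 0} with hB
  have hPne : ∀ i, P i ≠ 0 := by
    intro i hPi
    have := hev i 0
    rw [hPi] at this
    simp at this
  have hBc : B.Countable := by
    refine Set.countable_iUnion fun i => Set.Finite.countable ?_
    exact Polynomial.finite_setOf_isRoot (hPne i)
  have hpc : IsPathConnected Bᶜ :=
    hBc.isPathConnected_compl_of_one_lt_rank
      (by rw [Complex.rank_real_complex]; norm_num)
  have h0B : (0 : ℂ) ∈ Bᶜ := by
    simp only [hB, Set.mem_compl_iff, Set.mem_iUnion, not_exists, Set.mem_setOf_eq]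
    intro i hi
    rw [hev i 0] at hi
    simp at hi
  have h1B : (1 : ℂ) ∈ Bᶜ := by
    simp only [hB, Set.mem_compl_iff, Set.mem_iUnion, not_exists, Set.mem_setOf_eq]
    intro i hi
    rw [hev i 1] at hi
    simp only [one_smul, add_sub_cancel] at hi
    exact ((Matrix.isUnit_iff_isUnit_det _).mp (hgu i)).ne_zero hi
  have himg : f '' Bᶜ ⊆ S := by
    rintro _ ⟨z, hz, rfl⟩
    constructor
    · intro i
      rw [Matrix.isUnit_iff_isUnit_det, isUnit_iff_ne_zero, ← hev i z]
      simp only [hB, Set.mem_compl_iff, Set.mem_iUnion, not_exists, Set.mem_setOf_eq] at hz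
      exact hz i
    · intro h
      show (1 + z • (g (t h) - 1)) * x h = x h * (1 + z • (g (s h) - 1))
      rw [Matrix.add_mul, Matrix.mul_add, Matrix.smul_mul, Matrix.mul_smul, Matrix.sub_mul,
        Matrix.mul_sub, hgc h, Matrix.one_mul, Matrix.mul_one]
  obtain ⟨γ, hγ⟩ := hpc.joinedIn 0 h0B 1 h1B
  have hjoin : JoinedIn S (f 0) (f 1) :=
    ⟨γ.map hfc, fun u => himg ⟨γ u, hγ u, rfl⟩⟩
  rw [hf0, hf1] at hjoin
  exact hjoin
end
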